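/- arXiv:1706.09444 — 2 statements merged into one kernel-verified Lean document; each statement's English description precedes it below -/
import Mathlib

section
/- Let V and V' be finite-dimensional vector spaces over a field K, and let g and g' be endomorphisms of V and V'. If over an algebraic closure of K the characteristic polynomial of g factors as ∏_{i=1}^{n}(x − α_i) and that of g' as ∏_{j=1}^{n'}(x − α'_j), then the characteristic polynomial of g ⊗ g' on V ⊗ V' equals ∏_{i,j}(x − α_i α'_j). -/
open Polynomial Matrix Kronecker

set_option linter.unusedSectionVars false
set_option maxHeartbeats 1000000

variable {L : Type*} [Field L] [IsAlgClosed L]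

lemma exists_basis_head {n : ℕ} (v : Fin (n+1) → L) (hv : v ≠ 0) :
    ∃ b : Module.Basis (Fin (n+1)) L (Fin (n+1) → L), b 0 = v := by
  have hs := LinearIndepOn.singleton (R := L) (v := id) (i := v) hv
  let B := Module.Basis.extend hs
  have hmem : v ∈ hs.extend (Set.subset_univ _) :=
    hs.subset_extend _ (Set.mem_singleton v)
  have hcard : Fintype.card (hs.extend (Set.subset_univ ({v} : Set (Fin (n+1) → L)))) = n + 1 := by
    rw [← Module.finrank_eq_card_basis B]
    simp
  let τ := Fintype.equivFinOfCardEq hcard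
  let σ := τ.trans (Equiv.swap (τ ⟨v, hmem⟩) 0)
  refine ⟨B.reindex σ, ?_⟩
  have : σ.symm 0 = ⟨v, hmem⟩ := by
    simp [σ, Equiv.symm_trans_apply, Equiv.symm_swap, Equiv.swap_apply_right]
  rw [Module.Basis.reindex_apply, this, Module.Basis.extend_apply_self]

lemma exists_eigen {n : ℕ} (A : Matrix (Fin (n+1)) (Fin (n+1)) L) :
    ∃ (μ : L) (v : Fin (n+1) → L), v ≠ 0 ∧ A.mulVec v = μ • v := by
  obtain ⟨μ, hμ⟩ := Module.End.exists_eigenvalue (Matrix.mulVecLin A)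
  obtain ⟨v, hv⟩ := hμ.exists_hasEigenvector
  exact ⟨μ, v, hv.2, hv.apply_eq_smul⟩

lemma exists_conj_triangular :
    ∀ (n : ℕ) (A : Matrix (Fin n) (Fin n) L),
    ∃ P : Matrix (Fin n) (Fin n) L, IsUnit P.det ∧ (P⁻¹ * A * P).BlockTriangular id := by
  intro n
  induction n with
  | zero => exact fun A => ⟨1, by simp, fun i _ _ => i.elim0⟩
  | succ n ih =>
    intro A
    obtain ⟨μ, v, hv, hAv⟩ := exists_eigen A
    obtain ⟨b, hb0⟩ := exists_basis_head v hv
    classical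
    let P : Matrix (Fin (n+1)) (Fin (n+1)) L := (Pi.basisFun L (Fin (n+1))).toMatrix b
    have : Invertible P := (Pi.basisFun L (Fin (n+1))).invertibleToMatrix b
    have hP : IsUnit P.det := isUnit_det_of_invertible P
    have hPe : P.mulVec (Pi.single 0 1) = v := by
      funext i
      simp only [Matrix.mulVec_single, mul_one]
      simp [P, Module.Basis.toMatrix_apply, hb0]
    set M := P⁻¹ * A * P with hMdef
    have hMe : M.mulVec (Pi.single 0 1) = μ • (Pi.single 0 1 : Fin (n+1) → L) := by
      rw [hMdef, ← Matrix.mulVec_mulVec, ← Matrix.mulVec_mulVec, hPe, hAv,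
        Matrix.mulVec_smul, ← hPe, Matrix.mulVec_mulVec,
        Matrix.nonsing_inv_mul P hP]
      congr 1
      funext i
      simp [Matrix.one_apply, Pi.single_apply, eq_comm]
    have hM0 : ∀ i : Fin (n+1), i ≠ 0 → M i 0 = 0 := by
      intro i hi
      have h1 : M.mulVec (Pi.single 0 1) i = M i 0 := by
        simp [Matrix.mulVec_single]
      rw [hMe] at h1
      rw [← h1]
      simp [Pi.single_apply, hi]
    -- pass to blocks
    let ee : Fin 1 ⊕ Fin n ≃ Fin (n+1) := finSumFinEquiv.trans (finCongr (Nat.add_comm 1 n))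
    have hee0 : (ee (Sum.inl 0) : Fin (n+1)) = 0 := rfl
    have heer : ∀ j : Fin n, (ee (Sum.inr j) : ℕ) = 1 + j := fun j => rfl
    let N := M.submatrix ee ee
    obtain ⟨Q, hQ, hQT⟩ := ih N.toBlocks₂₂
    have : Invertible Q := Q.invertibleOfIsUnitDet hQ
    let R : Matrix (Fin 1 ⊕ Fin n) (Fin 1 ⊕ Fin n) L := Matrix.fromBlocks 1 0 0 Q
    let R' : Matrix (Fin 1 ⊕ Fin n) (Fin 1 ⊕ Fin n) L := Matrix.fromBlocks 1 0 0 Q⁻¹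
    have hR'R : R' * R = 1 := by
      simp [R, R', Matrix.fromBlocks_multiply, Matrix.nonsing_inv_mul Q hQ,
        ← Matrix.fromBlocks_one]
    have hRdet : IsUnit R.det := by
      rw [Matrix.det_fromBlocks_zero₂₁]
      simpa using hQ
    have hRinv : R⁻¹ = R' := Matrix.inv_eq_left_inv hR'R
    have hN21 : N.toBlocks₂₁ = 0 := by
      ext i j
      have hj : j = 0 := Subsingleton.elim _ _
      subst hj
      have hne : ee (Sum.inr i) ≠ 0 := by
        intro h
        have h' : (ee (Sum.inr i) : ℕ) = (0 : Fin (n+1)) := by rw [h]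
        rw [heer] at h'
        simp at h'
      have := hM0 _ hne
      simpa [N, Matrix.toBlocks₂₁, hee0] using this
    have hT : (R' * N * R).BlockTriangular (fun x => (ee x : Fin (n+1))) := by
      have hNblocks : N = Matrix.fromBlocks N.toBlocks₁₁ N.toBlocks₁₂ 0 N.toBlocks₂₂ := by
        rw [← hN21, Matrix.fromBlocks_toBlocks]
      rw [hNblocks]
      simp only [R, R', Matrix.fromBlocks_multiply]
      rintro (x | x) (y | y) hxy
      · obtain rfl : x = y := Subsingleton.elim x y
        exact absurd hxy (lt_irrefl _)
      · exfalso
        have hx : (ee (Sum.inl x) : ℕ) = 0 := by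
          obtain rfl : x = 0 := Subsingleton.elim x 0
          rfl
        have hy := heer y
        have hlt : (ee (Sum.inr y) : ℕ) < (ee (Sum.inl x) : ℕ) := hxy
        omega
      · simp [Matrix.fromBlocks_apply₂₁]
      · have hlt : (y : ℕ) < (x : ℕ) := by
          have h := hxy
          simp only [Fin.lt_def] at h
          rw [heer, heer] at h
          omega
        have := hQT (show id y < id x from hlt)
        simpa [Matrix.fromBlocks_apply₂₂, Matrix.mul_assoc] using this
    -- transport back along ee
    let S := R.submatrix ee.symm ee.symm
    let S' := R'.submatrix ee.symm ee.symm
    have hS'S : S' * S = 1 := by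
      rw [Matrix.submatrix_mul_equiv, hR'R]
      simp
    have hSdet : IsUnit S.det := by
      rwa [Matrix.det_submatrix_equiv_self]
    refine ⟨P * S, ?_, ?_⟩
    · rw [Matrix.det_mul]
      exact hP.mul hSdet
    · have hSinv : S⁻¹ = S' := Matrix.inv_eq_left_inv hS'S
      have key : (P * S)⁻¹ * A * (P * S) = S' * M * S := by
        rw [Matrix.mul_inv_rev, hSinv, hMdef]
        noncomm_ring
      rw [key]
      have hSMS : S' * M * S = (R' * N * R).submatrix ee.symm ee.symm := by
        have hM : M = N.submatrix ee.symm ee.symm := by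
          simp [N, Matrix.submatrix_submatrix]
        rw [hM]
        simp only [S, S', Matrix.submatrix_mul_equiv]
      rw [hSMS]
      intro i j hij
      have := hT (i := ee.symm i) (j := ee.symm j) (by simpa using hij)
      simpa using this

lemma charpoly_conj_eq {n : Type*} [Fintype n] [DecidableEq n] {R : Type*} [CommRing R]
    (P M : Matrix n n R) (hP : IsUnit P.det) :
    (P⁻¹ * M * P).charpoly = M.charpoly := by
  have h1 : (P⁻¹.map (C : R →+* R[X])) * (P.map C) = 1 := by
    rw [← Matrix.map_mul, Matrix.nonsing_inv_mul _ hP]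
    simp
  have hdet : (P⁻¹.map (C : R →+* R[X])).det * (P.map (C : R →+* R[X])).det = 1 := by
    rw [← Matrix.det_mul, h1, Matrix.det_one]
  have hch : charmatrix (P⁻¹ * M * P)
      = (P⁻¹.map (C : R →+* R[X])) * charmatrix M * (P.map C) := by
    unfold charmatrix
    rw [Matrix.mul_sub, Matrix.sub_mul]
    congr 1
    · have hcomm : Commute ((scalar n) X : Matrix n n R[X]) (P.map (C : R →+* R[X])) :=
        Matrix.scalar_commute X (fun r' => by exact Commute.all X r') _
      rw [Matrix.mul_assoc, hcomm.eq, ← Matrix.mul_assoc, h1, Matrix.one_mul]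
    · show RingHom.mapMatrix (C : R →+* R[X]) (P⁻¹ * M * P) = _
      rw [_root_.map_mul, _root_.map_mul]
      rfl
  rw [Matrix.charpoly, hch, Matrix.det_mul, Matrix.det_mul, Matrix.charpoly,
    mul_comm ((P⁻¹.map (C : R →+* R[X])).det), mul_assoc, hdet, mul_one]

lemma kronecker_map_ringHom {m n : Type*} {R S : Type*} [CommRing R] [CommRing S]
    (φ : R →+* S) (A : Matrix m m R) (B : Matrix n n R) :
    (A ⊗ₖ B).map φ = (A.map φ) ⊗ₖ (B.map φ) := by
  ext ⟨i, j⟩ ⟨k, l⟩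
  simp

lemma kronecker_submatrix {m n m' n' M N : Type*} {R : Type*} [CommRing R]
    (A : Matrix m m R) (B : Matrix n n R) (e : m' → m) (f : n' → n) :
    (A.submatrix e e) ⊗ₖ (B.submatrix f f)
      = (A ⊗ₖ B).submatrix (Prod.map e f) (Prod.map e f) := rfl

lemma kron_core {L : Type*} [Field L] [IsAlgClosed L] {m m' : ℕ}
    (A : Matrix (Fin m) (Fin m) L) (B : Matrix (Fin m') (Fin m') L)
    (α α' : Multiset L)
    (hA : A.charpoly = (α.map fun a => X - C a).prod)
    (hB : B.charpoly = (α'.map fun b => X - C b).prod)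
    :
    (A ⊗ₖ B).charpoly = (α.bind fun a => α'.map fun b => X - C (a * b)).prod := by
  classical
  obtain ⟨P, hP, hPT⟩ := exists_conj_triangular m A
  obtain ⟨Q, hQ, hQT⟩ := exists_conj_triangular m' B
  set A1 := P⁻¹ * A * P with hA1
  set B1 := Q⁻¹ * B * Q with hB1
  -- diagonal entries give the multisets
  have hAchar : A1.charpoly = ∏ i, (X - C (A1 i i)) := charpoly_of_upperTriangular _ hPT
  have hBchar : B1.charpoly = ∏ j, (X - C (B1 j j)) := charpoly_of_upperTriangular _ hQT
  have hαd : α = (Finset.univ.val.map fun i => A1 i i) := by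
    have h1 : (α.map fun a => X - C a).prod
        = (((Finset.univ.val.map fun i => A1 i i)).map fun a => X - C a).prod := by
      rw [← hA, ← charpoly_conj_eq P A hP, ← hA1, hAchar, Finset.prod_eq_multiset_prod,
        Multiset.map_map]
      rfl
    have := congrArg Polynomial.roots h1
    rwa [roots_multiset_prod_X_sub_C, roots_multiset_prod_X_sub_C] at this
  have hα'd : α' = (Finset.univ.val.map fun j => B1 j j) := by
    have h1 : (α'.map fun a => X - C a).prod
        = (((Finset.univ.val.map fun j => B1 j j)).map fun a => X - C a).prod := by
      rw [← hB, ← charpoly_conj_eq Q B hQ, ← hB1, hBchar, Finset.prod_eq_multiset_prod,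
        Multiset.map_map]
      rfl
    have := congrArg Polynomial.roots h1
    rwa [roots_multiset_prod_X_sub_C, roots_multiset_prod_X_sub_C] at this
  -- conjugation of the kronecker product
  have hPQ : IsUnit (P ⊗ₖ Q).det := by
    rw [Matrix.det_kronecker]
    exact (hP.pow _).mul (hQ.pow _)
  have hconj : (P ⊗ₖ Q)⁻¹ * (A ⊗ₖ B) * (P ⊗ₖ Q) = A1 ⊗ₖ B1 := by
    rw [Matrix.inv_kronecker, hA1, hB1, ← Matrix.mul_kronecker_mul, ← Matrix.mul_kronecker_mul]
  have hKchar : (A ⊗ₖ B).charpoly = (A1 ⊗ₖ B1).charpoly := by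
    rw [← charpoly_conj_eq (P ⊗ₖ Q) (A ⊗ₖ B) hPQ, hconj]
  -- triangularity of the kronecker product w.r.t. lex order
  have hT : (A1 ⊗ₖ B1).BlockTriangular (fun p : Fin m × Fin m' => toLex p) := by
    intro p q h
    rw [Prod.Lex.lt_iff] at h
    rcases h with h | ⟨h1, h2⟩
    · show A1 p.1 q.1 * B1 p.2 q.2 = 0
      rw [hPT (show id q.1 < id p.1 from h), zero_mul]
    · show A1 p.1 q.1 * B1 p.2 q.2 = 0
      rw [hQT (show id q.2 < id p.2 from h2), mul_zero]
  -- compute the charpoly via reindexing to the lex order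
  let E : (Fin m × Fin m') ≃ Lex (Fin m × Fin m') := toLex
  have hT' : ((A1 ⊗ₖ B1).submatrix E.symm E.symm).BlockTriangular id := by
    intro x y hxy
    exact hT (i := E.symm x) (j := E.symm y) (by simpa [E] using hxy)
  have hchar2 : (A1 ⊗ₖ B1).charpoly
      = ∏ x : Lex (Fin m × Fin m'), (X - C ((A1 ⊗ₖ B1) (E.symm x) (E.symm x))) := by
    rw [← Matrix.charpoly_reindex E (A1 ⊗ₖ B1)]
    exact charpoly_of_upperTriangular _ hT'
  -- put everything together
  rw [hKchar, hchar2, hαd, hα'd]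
  rw [Multiset.prod_bind]
  have : ∀ a : L, (((Finset.univ.val.map fun j => B1 j j)).map fun b => X - C (a * b)).prod
      = ∏ j, (X - C (a * B1 j j)) := by
    intro a
    rw [Finset.prod_eq_multiset_prod, Multiset.map_map]
    rfl
  rw [Multiset.map_map]
  have h2 : (Finset.univ.val.map
      ((fun a => (((Finset.univ.val.map fun j => B1 j j)).map fun b => X - C (a * b)).prod) ∘
        fun i => A1 i i)).prod
      = ∏ i, ∏ j, (X - C (A1 i i * B1 j j)) := by
    rw [Finset.prod_eq_multiset_prod]
    congr 1
    apply Multiset.map_congr rfl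
    intro i _
    exact this (A1 i i)
  rw [h2, ← Finset.prod_product']
  rw [Finset.univ_product_univ]
  exact (Fintype.prod_equiv E _ _ (fun p => by simp [E])).symm


/-- Let `V` and `V'` be finite-dimensional vector spaces over a field `K`,
and let `g` and `g'` be endomorphisms of `V` and `V'`. If over an algebraic closure of `K`
the characteristic polynomial of `g` factors as `∏ᵢ (X - αᵢ)` and that of `g'` as
`∏ⱼ (X - α'ⱼ)`, then the characteristic polynomial of `g ⊗ g'` on `V ⊗ V'` equals
`∏_{i,j} (X - αᵢ α'ⱼ)`. -/
theorem charpoly_tensorProduct_map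
    (K : Type) [Field K]
    (V V' : Type) [AddCommGroup V] [Module K V] [AddCommGroup V'] [Module K V']
    [FiniteDimensional K V] [FiniteDimensional K V']
    (g : V →ₗ[K] V) (g' : V' →ₗ[K] V')
    (α α' : Multiset (AlgebraicClosure K))
    (hα : g.charpoly.map (algebraMap K (AlgebraicClosure K))
        = (α.map fun a => X - C a).prod)
    (hα' : g'.charpoly.map (algebraMap K (AlgebraicClosure K))
        = (α'.map fun b => X - C b).prod) :
    (TensorProduct.map g g').charpoly.map (algebraMap K (AlgebraicClosure K))
      = (α.bind fun a => α'.map fun b => X - C (a * b)).prod := by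
  classical
  let L := AlgebraicClosure K
  let φ := algebraMap K L
  let bV := Module.finBasis K V
  let bV' := Module.finBasis K V'
  let MA : Matrix _ _ L := (LinearMap.toMatrix bV bV g).map φ
  let MB : Matrix _ _ L := (LinearMap.toMatrix bV' bV' g').map φ
  have hMA : MA.charpoly = (α.map fun a => X - C a).prod := by
    rw [Matrix.charpoly_map, LinearMap.charpoly_toMatrix, hα]
  have hMB : MB.charpoly = (α'.map fun b => X - C b).prod := by
    rw [Matrix.charpoly_map, LinearMap.charpoly_toMatrix, hα']
  have key := kron_core MA MB α α' hMA hMB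
  have hTM : (TensorProduct.map g g').charpoly
      = (LinearMap.toMatrix bV bV g ⊗ₖ LinearMap.toMatrix bV' bV' g').charpoly := by
    rw [← TensorProduct.toMatrix_map, LinearMap.charpoly_toMatrix]
  rw [hTM, ← Matrix.charpoly_map, kronecker_map_ringHom]
  exact key
end

section
/- Let K and L be fields of characteristic 0, V₁ and V₂ two finite-dimensional semisimple representations of a group Γ over K. If tr(ρ₁(γ)) = tr(ρ₂(γ)) for all γ ∈ Γ, then V₁ ≅ V₂ as Γ-representations. -/
set_option linter.unusedSectionVars false


open LinearMap Module Submodule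

section Helpers

variable {R : Type*} [Ring R]

theorem myPiSS {n : ℕ} {M : Type*} [AddCommGroup M] [Module R M]
    [IsSemisimpleModule R M] : IsSemisimpleModule R (Fin n → M) := by
  refine isSemisimpleModule_of_isSemisimpleModule_submodule (s := (Set.univ : Set (Fin n)))
    (p := fun i => LinearMap.range (LinearMap.single R (fun _ : Fin n => M) i))
    (fun i _ => IsSemisimpleModule.range _) ?_
  simpa using LinearMap.iSup_range_single R (fun _ : Fin n => M)

theorem myProdSS {M N : Type*} [AddCommGroup M] [AddCommGroup N] [Module R M] [Module R N]
    [IsSemisimpleModule R M] [IsSemisimpleModule R N] : IsSemisimpleModule R (M × N) := by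
  refine isSemisimpleModule_of_isSemisimpleModule_submodule (s := (Set.univ : Set Bool))
    (p := fun b => if b then LinearMap.range (inl R M N) else LinearMap.range (inr R M N))
    (fun i _ => ?_) ?_
  · cases i
    · show IsSemisimpleModule R (LinearMap.range (inr R M N))
      exact IsSemisimpleModule.congr (LinearEquiv.ofInjective _ LinearMap.inr_injective).symm
    · show IsSemisimpleModule R (LinearMap.range (inl R M N))
      exact IsSemisimpleModule.congr (LinearEquiv.ofInjective _ LinearMap.inl_injective).symm
  · rw [← top_le_iff, ← LinearMap.sup_range_inl_inr]
    refine sup_le ?_ ?_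
    · exact le_trans (by simp) (le_biSup _ (Set.mem_univ true))
    · exact le_trans (by simp) (le_biSup _ (Set.mem_univ false))

theorem mySSTransfer {R S M : Type*} [Ring R] [Ring S] [AddCommGroup M]
    [Module R M] [Module S M]
    (τ : R →+* S) (hτ : Function.Surjective τ) (hsmul : ∀ (r : R) (m : M), τ r • m = r • m)
    (h : IsSemisimpleModule R M) : IsSemisimpleModule S M := by
  haveI : RingHomSurjective τ := ⟨hτ⟩
  exact (LinearMap.isSemisimpleModule_iff_of_bijective
    (⟨⟨id, fun _ _ => rfl⟩, fun r m => (hsmul r m).symm⟩ : M →ₛₗ[τ] M)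
    Function.bijective_id).mp h

end Helpers

open LinearMap Module Submodule

section Part2

variable {K : Type*} [Field K] {B : Type*} [Ring B] [Algebra K B]
variable {M : Type*} [AddCommGroup M] [Module K M] [Module B M] [IsScalarTower K B M]

theorem myFDSub [FiniteDimensional K M] (p : Submodule B M) : FiniteDimensional K p :=
  Module.Finite.equiv ((Submodule.restrictScalarsEquiv K B M p).restrictScalars K)

theorem myCharSplit [FiniteDimensional K M] (p q : Submodule B M) (h : IsCompl p q) (b : B) :
    trace K M (Module.toModuleEnd K M b)
      = trace K p (Module.toModuleEnd K p b) + trace K q (Module.toModuleEnd K q b) := by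
  haveI := myFDSub (K := K) p
  haveI := myFDSub (K := K) q
  set c : (↥p × ↥q) ≃ₗ[K] M := (Submodule.prodEquivOfIsCompl p q h).restrictScalars K with hc
  have capp : ∀ x : ↥p × ↥q, c x = ↑x.1 + ↑x.2 := by
    intro x
    show (Submodule.prodEquivOfIsCompl p q h) x = _
    rw [← LinearEquiv.coe_coe, Submodule.coe_prodEquivOfIsCompl, LinearMap.coprod_apply]
    rfl
  have key : Module.toModuleEnd K M b
      = c.conj ((Module.toModuleEnd K p b).prodMap (Module.toModuleEnd K q b)) := by
    refine LinearMap.ext fun m => ?_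
    conv_lhs => rw [← c.apply_symm_apply m]
    rw [LinearEquiv.conj_apply]
    simp only [LinearMap.comp_apply, LinearEquiv.coe_coe, LinearEquiv.symm_apply_apply]
    generalize c.symm m = x
    rw [capp, capp]
    simp only [LinearMap.prodMap_apply]
    show b • ((x.1 : M) + (x.2 : M)) = ((b • x.1 : p) : M) + ((b • x.2 : q) : M)
    rw [smul_add]
    rfl
  rw [key, trace_conj', trace_prodMap']

theorem myCharConj {N : Type*} [AddCommGroup N] [Module K N] [Module B N] [IsScalarTower K B N]
    (e : M ≃ₗ[B] N) (b : B) :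
    trace K M (Module.toModuleEnd K M b) = trace K N (Module.toModuleEnd K N b) := by
  have : Module.toModuleEnd K N b = (e.restrictScalars K).conj (Module.toModuleEnd K M b) := by
    refine LinearMap.ext fun x => ?_
    rw [LinearEquiv.conj_apply]
    simp only [LinearMap.comp_apply, LinearEquiv.coe_coe, LinearEquiv.restrictScalars_apply]
    show b • x = e (b • e.symm x)
    rw [map_smul, e.apply_symm_apply]
  rw [this, trace_conj']

end Part2

open LinearMap Module Submodule

section Core

variable (K : Type) [Field K] [CharZero K] (B : Type) [Ring B] [Algebra K B]

theorem myFDSub' {M : Type*} [AddCommGroup M] [Module K M] [Module B M] [IsScalarTower K B M]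
    [FiniteDimensional K M] (p : Submodule B M) : FiniteDimensional K p :=
  Module.Finite.equiv ((Submodule.restrictScalarsEquiv K B M p).restrictScalars K)

variable [IsSemisimpleRing B]

theorem myMainAux : ∀ (n : ℕ) (M N : Type) [AddCommGroup M] [Module K M] [Module B M]
    [IsScalarTower K B M] [FiniteDimensional K M]
    [AddCommGroup N] [Module K N] [Module B N] [IsScalarTower K B N] [FiniteDimensional K N],
    finrank K M + finrank K N ≤ n →
    (∀ b : B, trace K M (Module.toModuleEnd K M b) = trace K N (Module.toModuleEnd K N b)) →
    Nonempty (M ≃ₗ[B] N) := by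
  intro n
  induction n with
  | zero =>
    intro M N _ _ _ _ _ _ _ _ _ _ hn _
    haveI : Subsingleton M := Module.finrank_zero_iff (R := K) |>.mp (by omega)
    haveI : Subsingleton N := Module.finrank_zero_iff (R := K) |>.mp (by omega)
    exact ⟨LinearEquiv.ofSubsingleton _ _⟩
  | succ n ih =>
    intro M N _ _ _ _ _ _ _ _ _ _ hn htr
    rcases subsingleton_or_nontrivial M with hM | hM
    · haveI : Subsingleton N := by
        have h1 := htr 1
        rw [show Module.toModuleEnd K M (1:B) = 1 from map_one _,
          show Module.toModuleEnd K N (1:B) = 1 from map_one _, trace_one, trace_one,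
          Module.finrank_zero_of_subsingleton (M := M)] at h1
        exact Module.finrank_zero_iff (R := K) |>.mp (Nat.cast_injective h1.symm)
      exact ⟨LinearEquiv.ofSubsingleton _ _⟩
    -- main case
    obtain ⟨e, he, hspan⟩ := IsSemisimpleRing.ideal_eq_span_idempotent (Module.annihilator B N)
    have heAnn : e ∈ Module.annihilator B N := by
      rw [hspan]; exact Ideal.subset_span rfl
    -- e acts as zero on N
    have htrN : Module.toModuleEnd K N e = 0 :=
      LinearMap.ext fun x => Module.mem_annihilator.mp heAnn x
    -- e acts as a projection on M, with zero trace, hence acts as zero on M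
    have heM : ∀ m : M, e • m = 0 := by
      set p : Module.End K M := Module.toModuleEnd K M e with hp
      have hproj : IsProj (LinearMap.range p) p := by
        constructor
        · exact fun x => LinearMap.mem_range_self p x
        · rintro x ⟨y, rfl⟩
          show e • (e • y) = e • y
          rw [← mul_smul, he]
      haveI : FiniteDimensional K (LinearMap.range p) := inferInstance
      have htrace : trace K M p = (finrank K (LinearMap.range p) : K) := hproj.trace
      rw [htr e, htrN, map_zero] at htrace
      have h0 : LinearMap.range p = ⊥ :=
        Submodule.finrank_eq_zero.mp (Nat.cast_eq_zero.mp htrace.symm)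
      intro m
      have : p m ∈ LinearMap.range p := LinearMap.mem_range_self p m
      rw [h0, Submodule.mem_bot] at this
      exact this
    -- the annihilator of N annihilates M
    have hAnnM : ∀ b ∈ Module.annihilator B N, ∀ m : M, b • m = (0 : M) := by
      intro b hb m
      rw [hspan] at hb
      obtain ⟨r, rfl⟩ := Submodule.mem_span_singleton.mp hb
      rw [smul_assoc, heM m, smul_zero]
    -- a simple submodule of M
    obtain ⟨T, hT⟩ := IsSemisimpleModule.exists_simple_submodule B M
    haveI := hT
    haveI : Nontrivial T := IsSimpleModule.nontrivial B T
    obtain ⟨t₀, ht₀⟩ := exists_ne (0 : T)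
    -- the cyclic surjection B → T kills the annihilator of N
    set ξ : B →ₗ[B] T := LinearMap.toSpanSingleton B T t₀ with hξ
    have hξsurj : Function.Surjective ξ := IsSimpleModule.toSpanSingleton_surjective B ht₀
    have hker : (Module.annihilator B N : Submodule B B) ≤ LinearMap.ker ξ := by
      intro b hb
      rw [LinearMap.mem_ker]
      apply Subtype.ext
      show b • (t₀ : M) = 0
      exact hAnnM b hb _
    set Q := B ⧸ (Module.annihilator B N : Submodule B B) with hQ
    set ξ' : Q →ₗ[B] T := Submodule.liftQ _ ξ hker with hξ'
    have hξ'surj : Function.Surjective ξ' := by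
      intro t
      obtain ⟨b, hb⟩ := hξsurj t
      exact ⟨Submodule.Quotient.mk b, hb⟩
    obtain ⟨C, hC⟩ := exists_isCompl (LinearMap.ker ξ')
    let eCT : C ≃ₗ[B] T :=
      (Submodule.quotientEquivOfIsCompl _ C hC).symm.trans (ξ'.quotKerEquivOfSurjective hξ'surj)
    -- the map from B to End K N, descending to an injection on Q
    set ψ : B →ₗ[B] (N →ₗ[K] N) :=
      { toFun := fun b => Module.toModuleEnd K N b
        map_add' := fun b b' => LinearMap.ext fun x => add_smul b b' x
        map_smul' := fun b b' => LinearMap.ext fun x => mul_smul b b' x } with hψ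
    have hkerψ : LinearMap.ker ψ = (Module.annihilator B N : Submodule B B) := by
      ext b
      simp only [LinearMap.mem_ker, Module.mem_annihilator]
      constructor
      · intro h x; exact DFunLike.congr_fun h x
      · intro h; exact LinearMap.ext fun x => h x
    set ψ' : Q →ₗ[B] (N →ₗ[K] N) := Submodule.liftQ _ ψ (le_of_eq hkerψ.symm) with hψ'
    have hψ'inj : Function.Injective ψ' := by
      rw [← LinearMap.ker_eq_bot, Submodule.ker_liftQ_eq_bot _ _ _ (le_of_eq hkerψ)]
    -- a nonzero map from T into End K N
    set F : T →ₗ[B] (N →ₗ[K] N) := (ψ'.comp C.subtype).comp eCT.symm.toLinearMap with hF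
    have hFinj : Function.Injective F := by
      intro x y hxy
      exact eCT.symm.injective (Subtype.val_injective (hψ'inj hxy))
    obtain ⟨t₁, ht₁⟩ := exists_ne (0 : T)
    have hFt₁ : F t₁ ≠ 0 := fun h => ht₁ (hFinj (by rw [h, map_zero]))
    obtain ⟨n₀, hn₀⟩ := DFunLike.ne_iff.mp hFt₁
    -- evaluation gives a nonzero B-linear map T → N
    set ev : (N →ₗ[K] N) →ₗ[B] N :=
      { toFun := fun f => f n₀
        map_add' := fun f g => rfl
        map_smul' := fun b f => rfl } with hev
    set h₀ : T →ₗ[B] N := ev.comp F with hh₀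
    have hh₀ne : h₀ ≠ 0 := fun h => hn₀ (by
      have := DFunLike.congr_fun h t₁
      simpa [h₀, ev] using this)
    have hh₀inj : Function.Injective h₀ := (h₀.injective_or_eq_zero).resolve_right hh₀ne
    set R : Submodule B N := LinearMap.range h₀ with hR
    let eTR : T ≃ₗ[B] R := LinearEquiv.ofInjective h₀ hh₀inj
    -- complements
    obtain ⟨T', hT'⟩ := exists_isCompl T
    obtain ⟨R', hR'⟩ := exists_isCompl R
    haveI : FiniteDimensional K T := myFDSub' K B T
    haveI : FiniteDimensional K T' := myFDSub' K B T'
    haveI : FiniteDimensional K R := myFDSub' K B R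
    haveI : FiniteDimensional K R' := myFDSub' K B R'
    -- character bookkeeping
    have htr' : ∀ b : B, trace K T' (Module.toModuleEnd K T' b)
        = trace K R' (Module.toModuleEnd K R' b) := by
      intro b
      have hM' := myCharSplit (K := K) T T' hT' b
      have hN' := myCharSplit (K := K) R R' hR' b
      have hTR := myCharConj (K := K) eTR b
      have := htr b
      rw [hM', hN', hTR] at this
      exact add_left_cancel this
    -- dimension bookkeeping
    have hdimM : finrank K M = finrank K T + finrank K T' := by
      rw [← Module.finrank_prod]
      exact (((Submodule.prodEquivOfIsCompl T T' hT').restrictScalars K).symm.finrank_eq)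
    have hdimN : finrank K N = finrank K R + finrank K R' := by
      rw [← Module.finrank_prod]
      exact (((Submodule.prodEquivOfIsCompl R R' hR').restrictScalars K).symm.finrank_eq)
    haveI : Nontrivial R := Nontrivial.mk (by
      obtain ⟨x, y, hxy⟩ := exists_pair_ne T
      exact ⟨eTR x, eTR y, fun h => hxy (eTR.injective h)⟩)
    have hTpos : 0 < finrank K T := Module.finrank_pos
    have hRpos : 0 < finrank K R := Module.finrank_pos
    obtain ⟨E'⟩ := ih T' R' (by omega) htr'
    have step1 : M ≃ₗ[B] (T × T') := (Submodule.prodEquivOfIsCompl T T' hT').symm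
    have step2 : (↥T × ↥T') ≃ₗ[B] (↥R × ↥R') :=
      eTR.prodCongr E'
    have step3 : (↥R × ↥R') ≃ₗ[B] N :=
      Submodule.prodEquivOfIsCompl R R' hR'
    exact ⟨step1.trans (step2.trans step3)⟩

end Core

open LinearMap Module Submodule

section Outer

variable {K Γ V : Type} [Field K] [Group Γ] [AddCommGroup V] [Module K V]

theorem myTower (ρ : Representation K Γ V) : IsScalarTower K (MonoidAlgebra K Γ) ρ.asModule :=
  ⟨fun k a x => by
    show ρ.asAlgebraHom (k • a) x = k • (ρ.asAlgebraHom a x)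
    rw [map_smul]
    rfl⟩

end Outer

set_option maxHeartbeats 2000000 in
set_option synthInstance.maxHeartbeats 1000000 in

theorem mySSRing (K B W : Type) [Field K] [Ring B] [Algebra K B]
    [AddCommGroup W] [Module K W] [Module B W] [IsScalarTower K B W]
    [FiniteDimensional K W] [IsSemisimpleModule B W]
    (hfaith : ∀ b : B, (∀ w : W, b • w = 0) → b = 0) : IsSemisimpleRing B := by
  let bW := Module.finBasis K W
  let eEnd : (Fin (Module.finrank K W) → W) ≃ₗ[B] (W →ₗ[K] W) := bW.constr B
  haveI ssPi : IsSemisimpleModule B (Fin (Module.finrank K W) → W) := myPiSS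
  haveI ssEnd : IsSemisimpleModule B (W →ₗ[K] W) := IsSemisimpleModule.congr eEnd.symm
  let ι : B →ₗ[B] (W →ₗ[K] W) :=
  { toFun := fun b => Module.toModuleEnd K W b
    map_add' := fun b b' => LinearMap.ext fun w => add_smul b b' w
    map_smul' := fun b b' => LinearMap.ext fun w => mul_smul b b' w }
  have hιinj : Function.Injective ι := by
    intro b b' h
    have h0 : ι (b - b') = 0 := by rw [map_sub, h, sub_self]
    have : ∀ w : W, (b - b') • w = 0 := fun w => DFunLike.congr_fun h0 w
    exact sub_eq_zero.mp (hfaith _ this)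
  exact IsSemisimpleModule.congr (LinearEquiv.ofInjective ι hιinj)

set_option maxHeartbeats 2000000 in
set_option synthInstance.maxHeartbeats 1000000 in
/-- Let `K` be a field of characteristic `0` and let `V₁`, `V₂` be two
finite-dimensional semisimple representations of a group `Γ` over `K`.  If
`tr (ρ₁ γ) = tr (ρ₂ γ)` for all `γ ∈ Γ`, then `V₁ ≅ V₂` as `Γ`-representations. -/
theorem semisimple_reps_iso_of_trace_eq
    (K : Type) [Field K] [CharZero K] (Γ : Type) [Group Γ]
    (V₁ V₂ : Type) [AddCommGroup V₁] [Module K V₁] [AddCommGroup V₂] [Module K V₂]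
    [FiniteDimensional K V₁] [FiniteDimensional K V₂]
    (ρ₁ : Representation K Γ V₁) (ρ₂ : Representation K Γ V₂)
    (h₁ : IsSemisimpleModule (MonoidAlgebra K Γ) ρ₁.asModule)
    (h₂ : IsSemisimpleModule (MonoidAlgebra K Γ) ρ₂.asModule)
    (htr : ∀ γ : Γ, LinearMap.trace K V₁ (ρ₁ γ) = LinearMap.trace K V₂ (ρ₂ γ)) :
    ∃ e : V₁ ≃ₗ[K] V₂, ∀ (γ : Γ) (v : V₁), e (ρ₁ γ v) = ρ₂ γ (e v) := by
  classical
  haveI := myTower ρ₁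
  haveI := myTower ρ₂
  haveI : FiniteDimensional K ρ₁.asModule := ‹FiniteDimensional K V₁›
  haveI : FiniteDimensional K ρ₂.asModule := ‹FiniteDimensional K V₂›
  set A := MonoidAlgebra K Γ with hAdef
  let W := ρ₁.asModule × ρ₂.asModule
  let π : A →ₐ[K] Module.End K W := Algebra.lsmul K K W
  let Bb : Subalgebra K (Module.End K W) := π.range
  -- the image of a group algebra element in `End K W` preserves the two factors
  have hfst : ∀ (b : Bb) (m : ρ₁.asModule),
      ((b : Module.End K W) (m, 0)) = (((b : Module.End K W) (m, 0)).1, 0) := by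
    intro b m
    obtain ⟨a, ha⟩ := (AlgHom.mem_range π).mp b.2
    rw [← ha]
    show (a • ((m, 0) : W)) = ((a • ((m, 0) : W)).1, 0)
    show ((a • m, a • (0 : ρ₂.asModule)) : W) = (a • m, 0)
    rw [smul_zero]
  have hsnd : ∀ (b : Bb) (m : ρ₂.asModule),
      ((b : Module.End K W) (0, m)) = (0, ((b : Module.End K W) (0, m)).2) := by
    intro b m
    obtain ⟨a, ha⟩ := (AlgHom.mem_range π).mp b.2
    rw [← ha]
    show (a • ((0, m) : W)) = (0, (a • ((0, m) : W)).2)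
    show ((a • (0 : ρ₁.asModule), a • m) : W) = (0, a • m)
    rw [smul_zero]
  -- ring homs to the endomorphism rings of the factors
  let σM : Bb →+* Module.End K ρ₁.asModule :=
  { toFun := fun b => (LinearMap.fst K ρ₁.asModule ρ₂.asModule) ∘ₗ (b : Module.End K W) ∘ₗ
      (LinearMap.inl K ρ₁.asModule ρ₂.asModule)
    map_one' := rfl
    map_mul' := fun b b' => by
      refine LinearMap.ext fun m => ?_
      show (((b * b' : Bb) : Module.End K W) (m, 0)).1
        = ((b : Module.End K W) ((((b' : Module.End K W)) (m, 0)).1, 0)).1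
      rw [show ((b * b' : Bb) : Module.End K W)
        = (b : Module.End K W) * (b' : Module.End K W) from rfl]
      show ((b : Module.End K W) ((b' : Module.End K W) (m, 0))).1 = _
      rw [hfst b' m]
    map_zero' := rfl
    map_add' := fun b b' => rfl }
  let σN : Bb →+* Module.End K ρ₂.asModule :=
  { toFun := fun b => (LinearMap.snd K ρ₁.asModule ρ₂.asModule) ∘ₗ (b : Module.End K W) ∘ₗ
      (LinearMap.inr K ρ₁.asModule ρ₂.asModule)
    map_one' := rfl
    map_mul' := fun b b' => by
      refine LinearMap.ext fun m => ?_
      show (((b * b' : Bb) : Module.End K W) (0, m)).2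
        = ((b : Module.End K W) (0, (((b' : Module.End K W)) (0, m)).2)).2
      rw [show ((b * b' : Bb) : Module.End K W)
        = (b : Module.End K W) * (b' : Module.End K W) from rfl]
      show ((b : Module.End K W) ((b' : Module.End K W) (0, m))).2 = _
      rw [hsnd b' m]
    map_zero' := rfl
    map_add' := fun b b' => rfl }
  letI instBM : Module Bb ρ₁.asModule := Module.compHom _ σM
  letI instBN : Module Bb ρ₂.asModule := Module.compHom _ σN
  letI instBW : Module Bb W := Module.compHom _ (Subalgebra.val Bb).toRingHom
  haveI instTowM : IsScalarTower K Bb ρ₁.asModule := ⟨fun k b m => by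
    show (((k • b : Bb) : Module.End K W) (m, 0)).1 = k • ((b : Module.End K W) (m, 0)).1
    rw [show ((k • b : Bb) : Module.End K W) = k • (b : Module.End K W) from rfl]
    rfl⟩
  haveI instTowN : IsScalarTower K Bb ρ₂.asModule := ⟨fun k b m => by
    show (((k • b : Bb) : Module.End K W) (0, m)).2 = k • ((b : Module.End K W) (0, m)).2
    rw [show ((k • b : Bb) : Module.End K W) = k • (b : Module.End K W) from rfl]
    rfl⟩
  haveI instTowW : IsScalarTower K Bb W := ⟨fun k b w => by
    show ((k • b : Bb) : Module.End K W) w = k • ((b : Module.End K W) w)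
    rw [show ((k • b : Bb) : Module.End K W) = k • (b : Module.End K W) from rfl]
    rfl⟩
  -- transfer semisimplicity along the surjection A → Bb
  let τ : A →+* Bb := (π.rangeRestrict : A →ₐ[K] Bb).toRingHom
  have hτsurj : Function.Surjective τ := AlgHom.rangeRestrict_surjective π
  have hcompatM : ∀ (a : A) (m : ρ₁.asModule), τ a • m = a • m := fun a m => rfl
  have hcompatN : ∀ (a : A) (m : ρ₂.asModule), τ a • m = a • m := fun a m => rfl
  have hcompatW : ∀ (a : A) (w : W), τ a • w = a • w := fun a w => rfl
  haveI ssM : IsSemisimpleModule Bb ρ₁.asModule := mySSTransfer τ hτsurj hcompatM h₁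
  haveI ssN : IsSemisimpleModule Bb ρ₂.asModule := mySSTransfer τ hτsurj hcompatN h₂
  haveI ssWA : IsSemisimpleModule A W := myProdSS
  haveI ssW : IsSemisimpleModule Bb W := mySSTransfer τ hτsurj hcompatW ssWA
  -- Bb is a semisimple ring
  haveI ssB : IsSemisimpleRing Bb := by
    refine @mySSRing K Bb W _ _ _ _ _ instBW instTowW _ ssW ?_
    intro b hb
    apply Subtype.ext
    exact LinearMap.ext fun w => hb w
  -- the K-linear identifications
  let eqv₁ : ρ₁.asModule ≃ₗ[K] V₁ := { ρ₁.asModuleEquiv with map_smul' := fun k x => rfl }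
  let eqv₂ : ρ₂.asModule ≃ₗ[K] V₂ := { ρ₂.asModuleEquiv with map_smul' := fun k x => rfl }
  -- equality of characters on all of Bb
  have hAll : ∀ a : A, trace K V₁ (ρ₁.asAlgebraHom a) = trace K V₂ (ρ₂.asAlgebraHom a) := by
    intro a
    have key : ((trace K V₁).comp (ρ₁.asAlgebraHom.toLinearMap) : A →ₗ[K] K)
        = (trace K V₂).comp (ρ₂.asAlgebraHom.toLinearMap) := by
      apply MonoidAlgebra.lhom_ext'
      intro γ
      refine LinearMap.ext fun r => ?_
      simp only [LinearMap.comp_apply, MonoidAlgebra.lsingle_apply, AlgHom.toLinearMap_apply,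
        Representation.asAlgebraHom_single, map_smul, smul_eq_mul]
      rw [htr γ]
    exact DFunLike.congr_fun key a
  have htrB : ∀ b : Bb, trace K ρ₁.asModule (Module.toModuleEnd K ρ₁.asModule b)
      = trace K ρ₂.asModule (Module.toModuleEnd K ρ₂.asModule b) := by
    intro b
    obtain ⟨a, ha⟩ := (AlgHom.mem_range π).mp b.2
    have e1 : Module.toModuleEnd K ρ₁.asModule b = eqv₁.symm.conj (ρ₁.asAlgebraHom a) := by
      refine LinearMap.ext fun m => ?_
      rw [LinearEquiv.conj_apply]
      simp only [LinearMap.comp_apply, LinearEquiv.coe_coe]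
      show ((b : Module.End K W) (m, 0)).1 = eqv₁.symm (ρ₁.asAlgebraHom a (eqv₁ m))
      rw [← ha]
      rfl
    have e2 : Module.toModuleEnd K ρ₂.asModule b = eqv₂.symm.conj (ρ₂.asAlgebraHom a) := by
      refine LinearMap.ext fun m => ?_
      rw [LinearEquiv.conj_apply]
      simp only [LinearMap.comp_apply, LinearEquiv.coe_coe]
      show ((b : Module.End K W) (0, m)).2 = eqv₂.symm (ρ₂.asAlgebraHom a (eqv₂ m))
      rw [← ha]
      rfl
    rw [e1, e2, trace_conj', trace_conj']
    exact hAll a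
  -- apply the main lemma
  obtain ⟨E⟩ := myMainAux K Bb (finrank K ρ₁.asModule + finrank K ρ₂.asModule)
    ρ₁.asModule ρ₂.asModule le_rfl htrB
  let EK : ρ₁.asModule ≃ₗ[K] ρ₂.asModule := E.restrictScalars K
  refine ⟨(eqv₁.symm.trans EK).trans eqv₂, fun γ v => ?_⟩
  show eqv₂ (EK (eqv₁.symm (ρ₁ γ v))) = ρ₂ γ (eqv₂ (EK (eqv₁.symm v)))
  have h1 : eqv₁.symm (ρ₁ γ v) = (MonoidAlgebra.of K Γ γ) • (eqv₁.symm v : ρ₁.asModule) :=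
    ρ₁.asModuleEquiv_symm_map_rho γ v
  rw [h1]
  have h2 : EK ((MonoidAlgebra.of K Γ γ) • (eqv₁.symm v : ρ₁.asModule))
      = (MonoidAlgebra.of K Γ γ) • EK (eqv₁.symm v) := by
    set a := MonoidAlgebra.of K Γ γ
    rw [← hcompatM a, ← hcompatN a]
    exact E.map_smul (τ a) _
  rw [h2]
  generalize EK (eqv₁.symm v) = y
  show eqv₂ ((MonoidAlgebra.of K Γ γ) • y) = ρ₂ γ (eqv₂ y)
  rw [show eqv₂ ((MonoidAlgebra.of K Γ γ) • y) = ρ₂.asAlgebraHom (MonoidAlgebra.of K Γ γ) (eqv₂ y)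
    from rfl, Representation.asAlgebraHom_of]
end
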